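/- Let ν > 0 be real. Then as b → 0, ∫_0^∞ u^ν / (1 + e^{u−b}) du = (1 − 2^{−ν})·Γ(1+ν)·ζ(1+ν) + b·∫_0^∞ u^ν / (e^{u/2} + e^{−u/2})² du + O(b²), where Γ is the Gamma function and ζ is the Riemann zeta function. -/

import Mathlib

open MeasureTheory Real Filter Asymptotics Topology

noncomputable def fermiP (x : ℝ) : ℝ := Real.exp x / (1 + Real.exp x) ^ 2

lemma fermiP_le (x : ℝ) : fermiP x ≤ Real.exp (-x) := by
  have h1 : (0:ℝ) < Real.exp x := Real.exp_pos x
  have : Real.exp (-x) = Real.exp x / (Real.exp x) ^ 2 := by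
    rw [Real.exp_neg]; field_simp
  rw [this, fermiP]
  apply div_le_div_of_nonneg_left h1.le (by positivity)
  nlinarith

lemma fermiP_nonneg (x : ℝ) : 0 ≤ fermiP x := by
  unfold fermiP; positivity

lemma hasDerivAt_fermiP (x : ℝ) :
    HasDerivAt fermiP (Real.exp x * (1 - Real.exp x) / (1 + Real.exp x) ^ 3) x := by
  have h1 : (0:ℝ) < Real.exp x := Real.exp_pos x
  have hne : (1 + Real.exp x) ^ 2 ≠ 0 := by positivity
  have h2 : HasDerivAt (fun y : ℝ => (1 + Real.exp y) ^ 2)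
      (2 * (1 + Real.exp x) ^ 1 * Real.exp x) x :=
    ((Real.hasDerivAt_exp x).const_add 1).pow 2
  have h3 := h2.inv hne
  have h4 := (Real.hasDerivAt_exp x).mul h3
  have heq : fermiP = fun y => Real.exp y * ((1 + Real.exp y) ^ 2)⁻¹ := by
    funext y; rw [fermiP, div_eq_mul_inv]
  rw [heq]
  refine h4.congr_deriv ?_
  simp only [Pi.inv_apply]
  field_simp
  ring

lemma abs_deriv_fermiP_le (x : ℝ) :
    |Real.exp x * (1 - Real.exp x) / (1 + Real.exp x) ^ 3| ≤ Real.exp (-x) := by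
  have h1 : (0:ℝ) < Real.exp x := Real.exp_pos x
  have h2 : (0:ℝ) < 1 + Real.exp x := by linarith
  rw [abs_div, abs_mul, abs_of_pos h1, abs_of_pos (by positivity : (0:ℝ) < (1 + Real.exp x)^3)]
  have h3 : |1 - Real.exp x| ≤ 1 + Real.exp x := by
    rw [abs_le]; constructor <;> linarith
  have key : Real.exp x * |1 - Real.exp x| / (1 + Real.exp x) ^ 3
      ≤ Real.exp x * (1 + Real.exp x) / (1 + Real.exp x) ^ 3 := by gcongr
  refine key.trans ?_
  have : Real.exp x * (1 + Real.exp x) / (1 + Real.exp x) ^ 3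
      = Real.exp x / (1 + Real.exp x) ^ 2 := by field_simp
  rw [this]
  exact fermiP_le x

lemma hasDerivAt_inv_one_add_exp (u t : ℝ) :
    HasDerivAt (fun t : ℝ => (1 + Real.exp (u - t))⁻¹) (fermiP (u - t)) t := by
  have h1 : HasDerivAt (fun t : ℝ => u - t) (-1) t := by
    simpa using (hasDerivAt_id t).const_sub u
  have h2 : HasDerivAt (fun t : ℝ => Real.exp (u - t)) (Real.exp (u - t) * (-1)) t :=
    (Real.hasDerivAt_exp (u - t)).comp t h1
  have h3 : HasDerivAt (fun t : ℝ => 1 + Real.exp (u - t)) (Real.exp (u - t) * (-1)) t :=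
    h2.const_add 1
  have hpos : (0:ℝ) < 1 + Real.exp (u - t) := by positivity
  have h4 := h3.inv (ne_of_gt hpos)
  refine h4.congr_deriv ?_
  simp only [fermiP]
  ring

lemma fermiP_lip (u : ℝ) {t : ℝ} (ht : |t| ≤ 1) :
    |fermiP (u - t) - fermiP u| ≤ Real.exp (1 - u) * |t| := by
  have hder : ∀ x ∈ Set.Icc (-1:ℝ) 1, HasDerivWithinAt (fun t => fermiP (u - t))
      ((Real.exp (u - x) * (1 - Real.exp (u - x)) / (1 + Real.exp (u - x)) ^ 3) * (-1))
      (Set.Icc (-1:ℝ) 1) x := by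
    intro x _
    have h1 : HasDerivAt (fun t : ℝ => u - t) (-1) x := by
      simpa using (hasDerivAt_id x).const_sub u
    exact ((hasDerivAt_fermiP (u - x)).comp x h1).hasDerivWithinAt
  have hbound : ∀ x ∈ Set.Icc (-1:ℝ) 1,
      ‖(Real.exp (u - x) * (1 - Real.exp (u - x)) / (1 + Real.exp (u - x)) ^ 3) * (-1)‖
        ≤ Real.exp (1 - u) := by
    intro x hx
    rw [norm_mul, Real.norm_eq_abs, Real.norm_eq_abs, abs_neg, abs_one, mul_one]
    refine (abs_deriv_fermiP_le (u - x)).trans ?_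
    apply Real.exp_le_exp.2
    have := hx.2
    linarith
  have h0 : (0:ℝ) ∈ Set.Icc (-1:ℝ) 1 := by constructor <;> norm_num
  have htm : t ∈ Set.Icc (-1:ℝ) 1 := by
    rcases abs_le.1 ht with ⟨h1, h2⟩; exact ⟨h1, h2⟩
  have := (convex_Icc (-1:ℝ) 1).norm_image_sub_le_of_norm_hasDerivWithin_le hder hbound h0 htm
  simpa [Real.norm_eq_abs] using this

lemma taylor_bound (u : ℝ) {b : ℝ} (hb : |b| ≤ 1) :
    |(1 + Real.exp (u - b))⁻¹ - (1 + Real.exp u)⁻¹ - b * fermiP u|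
      ≤ Real.exp (1 - u) * b ^ 2 := by
  set s : Set ℝ := Set.Icc (-|b|) |b| with hs
  have hder : ∀ x ∈ s, HasDerivWithinAt (fun t => (1 + Real.exp (u - t))⁻¹ - t * fermiP u)
      (fermiP (u - x) - fermiP u) s x := by
    intro x _
    have := (hasDerivAt_inv_one_add_exp u x).sub ((hasDerivAt_id x).mul_const (fermiP u))
    exact (this.congr_deriv (by ring)).hasDerivWithinAt
  have hbound : ∀ x ∈ s, ‖fermiP (u - x) - fermiP u‖ ≤ Real.exp (1 - u) * |b| := by
    intro x hx
    have hxb : |x| ≤ |b| := abs_le.2 ⟨hx.1, hx.2⟩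
    refine (fermiP_lip u (hxb.trans hb)).trans ?_
    gcongr
  have h0 : (0:ℝ) ∈ s := ⟨neg_nonpos.2 (abs_nonneg b), abs_nonneg b⟩
  have hbm : b ∈ s := ⟨neg_abs_le b, le_abs_self b⟩
  have key := (convex_Icc (-|b|) (|b|)).norm_image_sub_le_of_norm_hasDerivWithin_le
    hder hbound h0 hbm
  simp only [Real.norm_eq_abs, sub_zero, zero_mul, sub_zero] at key
  have : Real.exp (1 - u) * |b| * |b| = Real.exp (1 - u) * b ^ 2 := by
    rw [mul_assoc, ← abs_mul, ← sq, abs_of_nonneg (sq_nonneg b)]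
  rw [this] at key
  have heq : (1 + Real.exp (u - b))⁻¹ - (1 + Real.exp u)⁻¹ - b * fermiP u
      = (1 + Real.exp (u - b))⁻¹ - b * fermiP u - (1 + Real.exp u)⁻¹ := by ring
  rw [heq]
  exact key

lemma int_exp_aux {ν : ℝ} (hν : 0 < ν) {c : ℝ} (hc : 0 < c) :
    IntegrableOn (fun u : ℝ => u ^ ν * Real.exp (-(c * u))) (Set.Ioi 0) := by
  have h := integrableOn_rpow_mul_exp_neg_mul_rpow (by linarith : (-1:ℝ) < ν) one_pos hc
  refine h.congr_fun (fun x hx => ?_) measurableSet_Ioi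
  simp only [Real.rpow_one, neg_mul]

lemma int_exp_val {ν : ℝ} (hν : 0 < ν) {c : ℝ} (hc : 0 < c) :
    ∫ u in Set.Ioi (0:ℝ), u ^ ν * Real.exp (-(c * u))
      = (1 / c) ^ (ν + 1) * Real.Gamma (ν + 1) := by
  have h := integral_rpow_mul_exp_neg_mul_Ioi (by linarith : (0:ℝ) < ν + 1) hc
  rw [← h]
  refine setIntegral_congr_fun measurableSet_Ioi (fun x _ => ?_)
  norm_num

lemma meas_aux (ν b : ℝ) :
    AEStronglyMeasurable (fun u : ℝ => u ^ ν / (1 + Real.exp (u - b)))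
      (volume.restrict (Set.Ioi 0)) := by
  apply Measurable.aestronglyMeasurable
  fun_prop

lemma inv_one_add_exp_le (y : ℝ) : (1 + Real.exp y)⁻¹ ≤ Real.exp (-y) := by
  rw [Real.exp_neg]
  exact inv_anti₀ (Real.exp_pos y) (by linarith [Real.exp_pos y])

lemma integrable_F {ν : ℝ} (hν : 0 < ν) (b : ℝ) :
    IntegrableOn (fun u : ℝ => u ^ ν / (1 + Real.exp (u - b))) (Set.Ioi 0) := by
  refine Integrable.mono' ((int_exp_aux hν one_pos).const_mul (Real.exp b)) (meas_aux ν b) ?_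
  filter_upwards [ae_restrict_mem measurableSet_Ioi] with u hu
  have hu0 : (0:ℝ) < u := hu
  rw [Real.norm_eq_abs, abs_of_nonneg (by positivity)]
  have h1 : u ^ ν / (1 + Real.exp (u - b)) ≤ u ^ ν * Real.exp (-(u - b)) := by
    rw [div_eq_mul_inv]
    gcongr
    exact inv_one_add_exp_le (u - b)
  refine h1.trans (le_of_eq ?_)
  rw [one_mul, show Real.exp b * (u ^ ν * Real.exp (-u)) = u ^ ν * (Real.exp b * Real.exp (-u)) by ring,
    ← Real.exp_add]
  ring_nf

lemma integrable_PInt {ν : ℝ} (hν : 0 < ν) :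
    IntegrableOn (fun u : ℝ => u ^ ν * fermiP u) (Set.Ioi 0) := by
  refine Integrable.mono' (int_exp_aux hν one_pos) ?_ ?_
  · apply Measurable.aestronglyMeasurable
    unfold fermiP
    fun_prop
  · filter_upwards [ae_restrict_mem measurableSet_Ioi] with u hu
    have hu0 : (0:ℝ) < u := hu
    have hP := fermiP_nonneg u
    have hr : (0:ℝ) ≤ u ^ ν := Real.rpow_nonneg hu0.le ν
    rw [Real.norm_eq_abs, abs_of_nonneg (mul_nonneg hr hP), one_mul]
    gcongr
    simpa using fermiP_le u

lemma summable_aux {ν : ℝ} (hν : 0 < ν) :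
    Summable (fun n : ℕ => ((1:ℝ) / (n + 1)) ^ (ν + 1)) := by
  have h : Summable (fun n : ℕ => 1 / ((n:ℝ)) ^ (ν + 1)) :=
    Real.summable_one_div_nat_rpow.mpr (by linarith)
  have h2 := (summable_nat_add_iff 1).mpr h
  refine h2.congr fun n => ?_
  push_cast
  rw [Real.div_rpow (by norm_num) (by positivity), Real.one_rpow]

lemma tsum_pointwise {ν : ℝ} {u : ℝ} (hu : 0 < u) :
    ∑' n : ℕ, ((-1:ℝ)) ^ n * (u ^ ν * Real.exp (-(((n:ℝ) + 1) * u)))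
      = u ^ ν / (1 + Real.exp u) := by
  have hlt : ‖(-Real.exp (-u))‖ < 1 := by
    rw [norm_neg, Real.norm_eq_abs, abs_of_pos (Real.exp_pos _)]
    exact Real.exp_lt_one_iff.mpr (by linarith)
  have hterm : ∀ n : ℕ, ((-1:ℝ)) ^ n * (u ^ ν * Real.exp (-(((n:ℝ) + 1) * u)))
      = (u ^ ν * Real.exp (-u)) * (-Real.exp (-u)) ^ n := by
    intro n
    have h1 : Real.exp (-(((n:ℝ) + 1) * u)) = Real.exp (-u) * Real.exp (-((n:ℝ) * u)) := by
      rw [← Real.exp_add]; ring_nf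
    have h2 : (-Real.exp (-u)) ^ n = (-1:ℝ) ^ n * Real.exp (-((n:ℝ) * u)) := by
      rw [neg_pow, ← Real.exp_nat_mul, mul_neg]
    rw [h1, h2]; ring
  rw [tsum_congr hterm, tsum_mul_left, tsum_geometric_of_norm_lt_one hlt, sub_neg_eq_add]
  have h5 : 1 + Real.exp (-u) = (1 + Real.exp u) * Real.exp (-u) := by
    rw [add_mul, one_mul, ← Real.exp_add, add_neg_cancel, Real.exp_zero, add_comm]
  rw [h5, mul_inv]
  have he := Real.exp_ne_zero (-u)
  have hd : (1 + Real.exp u) ≠ 0 := by positivity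
  field_simp

lemma F0_eq {ν : ℝ} (hν : 0 < ν) :
    ∫ u in Set.Ioi (0:ℝ), u ^ ν / (1 + Real.exp u)
      = Real.Gamma (ν + 1) * ∑' n : ℕ, ((-1:ℝ)) ^ n * ((1:ℝ) / (n + 1)) ^ (ν + 1) := by
  set f : ℕ → ℝ → ℝ := fun n u => ((-1:ℝ)) ^ n * (u ^ ν * Real.exp (-(((n:ℝ) + 1) * u))) with hf
  have hc : ∀ n : ℕ, (0:ℝ) < (n:ℝ) + 1 := fun n => by positivity
  have h_int : ∀ n : ℕ, IntegrableOn (f n) (Set.Ioi 0) := fun n =>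
    ((int_exp_aux hν (hc n))).const_mul _
  have hmeas : ∀ n : ℕ, AEStronglyMeasurable (f n) (volume.restrict (Set.Ioi 0)) := fun n =>
    (h_int n).aestronglyMeasurable
  have hnorm : ∀ n : ℕ, ∫ u in Set.Ioi (0:ℝ), ‖f n u‖
      = ((1:ℝ) / (n + 1)) ^ (ν + 1) * Real.Gamma (ν + 1) := by
    intro n
    rw [← int_exp_val hν (hc n)]
    refine setIntegral_congr_fun measurableSet_Ioi (fun x hx => ?_)
    have hx0 : (0:ℝ) < x := hx
    rw [hf]
    simp only [norm_mul, norm_pow, norm_neg, norm_one, one_pow, one_mul, Real.norm_eq_abs]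
    rw [abs_of_nonneg (Real.rpow_nonneg hx0.le ν), abs_of_pos (Real.exp_pos _)]
  have hsum : Summable (fun n : ℕ => ((1:ℝ) / (n + 1)) ^ (ν + 1) * Real.Gamma (ν + 1)) :=
    (summable_aux hν).mul_right _
  have hlint : ∑' n : ℕ, ∫⁻ u in Set.Ioi (0:ℝ), ‖f n u‖ₑ ≠ ⊤ := by
    have heq : ∀ n : ℕ, ∫⁻ u in Set.Ioi (0:ℝ), ‖f n u‖ₑ
        = ENNReal.ofReal (((1:ℝ) / (n + 1)) ^ (ν + 1) * Real.Gamma (ν + 1)) := by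
      intro n
      rw [← MeasureTheory.ofReal_integral_norm_eq_lintegral_enorm (h_int n), hnorm n]
    rw [tsum_congr heq, ← ENNReal.ofReal_tsum_of_nonneg (fun n => by positivity) hsum]
    exact ENNReal.ofReal_ne_top
  have key := MeasureTheory.integral_tsum hmeas hlint
  have hLHS : ∫ u in Set.Ioi (0:ℝ), u ^ ν / (1 + Real.exp u)
      = ∫ u in Set.Ioi (0:ℝ), ∑' n : ℕ, f n u := by
    refine setIntegral_congr_fun measurableSet_Ioi (fun x hx => ?_)
    exact (tsum_pointwise hx).symm
  rw [hLHS, key]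
  have hintval : ∀ n : ℕ, ∫ u in Set.Ioi (0:ℝ), f n u
      = ((-1:ℝ)) ^ n * (((1:ℝ) / (n + 1)) ^ (ν + 1) * Real.Gamma (ν + 1)) := by
    intro n
    rw [hf]
    simp only
    rw [integral_const_mul, int_exp_val hν (hc n)]
  rw [tsum_congr hintval]
  rw [show (fun n : ℕ => ((-1:ℝ)) ^ n * (((1:ℝ) / (n + 1)) ^ (ν + 1) * Real.Gamma (ν + 1)))
      = fun n : ℕ => (((-1:ℝ)) ^ n * ((1:ℝ) / (n + 1)) ^ (ν + 1)) * Real.Gamma (ν + 1) from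
    funext fun n => by ring]
  rw [tsum_mul_right, mul_comm]

lemma eta_eq {ν : ℝ} (hν : 0 < ν) :
    ∑' n : ℕ, ((-1:ℝ)) ^ n * ((1:ℝ) / (n + 1)) ^ (ν + 1)
      = (1 - 2 ^ (-ν)) * ∑' n : ℕ, ((1:ℝ) / (n + 1)) ^ (ν + 1) := by
  set a : ℕ → ℝ := fun n => ((1:ℝ) / (n + 1)) ^ (ν + 1) with ha
  have hsa : Summable a := summable_aux hν
  have hanon : ∀ n, 0 ≤ a n := fun n => Real.rpow_nonneg (by positivity) _
  set g : ℕ → ℝ := fun n => ((-1:ℝ)) ^ n * a n with hg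
  have habs : (fun n => |g n|) = a := funext fun n => by
    rw [hg]; simp only [abs_mul, abs_pow, abs_neg, abs_one, one_pow, one_mul,
      abs_of_nonneg (hanon n)]
  have hsg : Summable g := Summable.of_abs (habs ▸ hsa)
  have hinj2 : Function.Injective (fun k : ℕ => 2 * k) := fun x y h => by simp only at h; omega
  have hinj2' : Function.Injective (fun k : ℕ => 2 * k + 1) := fun x y h => by simp only at h; omega
  have he_a : Summable (fun k => a (2 * k)) := hsa.comp_injective hinj2
  have ho_a : Summable (fun k => a (2 * k + 1)) := hsa.comp_injective hinj2'
  have heven : ∀ k : ℕ, g (2 * k) = a (2 * k) := fun k => by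
    rw [hg]; simp [pow_mul]
  have hodd : ∀ k : ℕ, g (2 * k + 1) = -a (2 * k + 1) := fun k => by
    rw [hg]; simp [pow_succ, pow_mul]
  have he_g : Summable (fun k => g (2 * k)) := he_a.congr (fun k => (heven k).symm)
  have ho_g : Summable (fun k => g (2 * k + 1)) := ho_a.neg.congr (fun k => (hodd k).symm)
  have hodd_val : ∑' k : ℕ, a (2 * k + 1) = 2 ^ (-(ν + 1)) * ∑' k : ℕ, a k := by
    rw [← tsum_mul_left]
    refine tsum_congr fun k => ?_
    rw [ha]
    simp only
    rw [show ((2 * k + 1 : ℕ) : ℝ) + 1 = 2 * ((k : ℝ) + 1) by push_cast; ring]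
    rw [show (2:ℝ) ^ (-(ν + 1)) = ((1:ℝ)/2) ^ (ν + 1) by
      rw [one_div, Real.inv_rpow (by norm_num), ← Real.rpow_neg (by norm_num)]]
    rw [← Real.mul_rpow (by norm_num) (by positivity)]
    congr 1
    field_simp
  have h2 : (2:ℝ) * 2 ^ (-(ν + 1)) = 2 ^ (-ν) := by
    rw [show -ν = 1 + -(ν + 1) by ring, Real.rpow_add (by norm_num), Real.rpow_one]
  calc ∑' n : ℕ, g n = (∑' k : ℕ, g (2 * k)) + ∑' k : ℕ, g (2 * k + 1) :=
        (tsum_even_add_odd he_g ho_g).symm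
    _ = (∑' k : ℕ, a (2 * k)) - ∑' k : ℕ, a (2 * k + 1) := by
        rw [tsum_congr heven, tsum_congr hodd, tsum_neg]; ring
    _ = ((∑' n : ℕ, a n) - ∑' k : ℕ, a (2 * k + 1)) - ∑' k : ℕ, a (2 * k + 1) := by
        rw [← tsum_even_add_odd he_a ho_a]; ring
    _ = (∑' n : ℕ, a n) - 2 * (2 ^ (-(ν + 1)) * ∑' n : ℕ, a n) := by
        rw [hodd_val]; ring
    _ = (1 - 2 ^ (-ν)) * ∑' n : ℕ, a n := by rw [← h2]; ring

lemma zeta_re_eq {ν : ℝ} (hν : 0 < ν) :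
    (riemannZeta ((1:ℂ) + ν)).re = ∑' n : ℕ, ((1:ℝ) / (n + 1)) ^ (ν + 1) := by
  have hs : 1 < ((1:ℂ) + ν).re := by
    simp only [Complex.add_re, Complex.one_re, Complex.ofReal_re]
    linarith
  rw [zeta_eq_tsum_one_div_nat_add_one_cpow hs]
  have hterm : ∀ n : ℕ, (1 / ((n:ℂ) + 1) ^ ((1:ℂ) + ν))
      = ((((1:ℝ) / (n + 1)) ^ (ν + 1) : ℝ) : ℂ) := by
    intro n
    have h0 : (0:ℝ) ≤ (n:ℝ) + 1 := by positivity
    have hexp : ((1:ℂ) + ν) = (((ν + 1 : ℝ)):ℂ) := by push_cast; ring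
    have hbase : ((n:ℂ) + 1) = (((n:ℝ) + 1 : ℝ):ℂ) := by push_cast; ring
    rw [hexp, hbase, ← Complex.ofReal_cpow h0, ← Complex.ofReal_one, ← Complex.ofReal_div]
    congr 1
    rw [one_div, ← Real.inv_rpow h0, ← one_div]
  rw [tsum_congr hterm, ← Complex.ofReal_tsum, Complex.ofReal_re]

lemma cosh_integrand_eq (ν u : ℝ) :
    u ^ ν / (Real.exp (u / 2) + Real.exp (-u / 2)) ^ 2 = u ^ ν * fermiP u := by
  have h : Real.exp (u / 2) + Real.exp (-u / 2) = (1 + Real.exp u) * Real.exp (-(u / 2)) := by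
    rw [add_mul, one_mul, ← Real.exp_add, show u + -(u / 2) = u / 2 by ring, neg_div, add_comm]
  rw [h, mul_pow, fermiP]
  have h2 : Real.exp (-(u / 2)) ^ 2 = Real.exp (-u) := by
    rw [sq, ← Real.exp_add]; ring_nf
  rw [h2, Real.exp_neg]
  have he := Real.exp_ne_zero u
  have hd : (1 + Real.exp u) ≠ 0 := by positivity
  field_simp

/-- First-order expansion in `b` of the Fermi-Dirac moment: as `b → 0`,
`∫_0^∞ u^ν/(1+e^{u−b}) du = (1−2^{−ν})Γ(1+ν)ζ(1+ν)
 + b ∫_0^∞ u^ν/(e^{u/2}+e^{−u/2})² du + O(b²)`. -/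
theorem fermi_moment_expansion_in_b (ν : ℝ) (hν : 0 < ν) :
    (fun b : ℝ =>
        (∫ u in Set.Ioi (0 : ℝ), u ^ ν / (1 + Real.exp (u - b)))
          - ((1 - 2 ^ (-ν)) * Real.Gamma (1 + ν) * (riemannZeta ((1 : ℂ) + ν)).re
            + b * ∫ u in Set.Ioi (0 : ℝ), u ^ ν / (Real.exp (u / 2) + Real.exp (-u / 2)) ^ 2))
      =O[𝓝 0] fun b : ℝ => b ^ 2 := by
  -- rewrite constant term as the b = 0 integral
  have hC : (1 - 2 ^ (-ν)) * Real.Gamma (1 + ν) * (riemannZeta ((1 : ℂ) + ν)).re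
      = ∫ u in Set.Ioi (0:ℝ), u ^ ν / (1 + Real.exp u) := by
    rw [F0_eq hν, eta_eq hν, zeta_re_eq hν, add_comm 1 ν]
    ring
  -- rewrite linear term integral
  have hI : (∫ u in Set.Ioi (0:ℝ), u ^ ν / (Real.exp (u / 2) + Real.exp (-u / 2)) ^ 2)
      = ∫ u in Set.Ioi (0:ℝ), u ^ ν * fermiP u :=
    setIntegral_congr_fun measurableSet_Ioi fun u _ => cosh_integrand_eq ν u
  rw [isBigO_iff]
  refine ⟨Real.exp 1 * Real.Gamma (ν + 1), ?_⟩
  have hball : Metric.closedBall (0:ℝ) 1 ∈ 𝓝 (0:ℝ) := Metric.closedBall_mem_nhds 0 one_pos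
  filter_upwards [hball] with b hb
  have hb1 : |b| ≤ 1 := by
    rw [Metric.mem_closedBall, Real.dist_eq, sub_zero] at hb
    exact hb
  rw [hC, hI]
  -- integrability
  have h1 : IntegrableOn (fun u : ℝ => u ^ ν / (1 + Real.exp (u - b))) (Set.Ioi 0) :=
    integrable_F hν b
  have h2 : IntegrableOn (fun u : ℝ => u ^ ν / (1 + Real.exp u)) (Set.Ioi 0) := by
    have := integrable_F hν 0
    refine this.congr_fun (fun u _ => by simp only [sub_zero]) measurableSet_Ioi
  have h3 : IntegrableOn (fun u : ℝ => b * (u ^ ν * fermiP u)) (Set.Ioi 0) :=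
    (integrable_PInt hν).const_mul b
  have hsplit : (∫ u in Set.Ioi (0:ℝ), u ^ ν / (1 + Real.exp (u - b)))
      - ((∫ u in Set.Ioi (0:ℝ), u ^ ν / (1 + Real.exp u))
          + b * ∫ u in Set.Ioi (0:ℝ), u ^ ν * fermiP u)
      = ∫ u in Set.Ioi (0:ℝ), (u ^ ν / (1 + Real.exp (u - b)) - u ^ ν / (1 + Real.exp u)
          - b * (u ^ ν * fermiP u)) := by
    have h12 : IntegrableOn (fun u : ℝ => u ^ ν / (1 + Real.exp (u - b))
        - u ^ ν / (1 + Real.exp u)) (Set.Ioi 0) := h1.sub h2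
    rw [integral_sub h12 h3, integral_sub h1 h2, integral_const_mul]
    ring
  rw [hsplit]
  -- pointwise bound
  have hbnd_int : IntegrableOn
      (fun u : ℝ => Real.exp 1 * b ^ 2 * (u ^ ν * Real.exp (-(1 * u)))) (Set.Ioi 0) :=
    (int_exp_aux hν one_pos).const_mul _
  have hptwise : ∀ᵐ u ∂(volume.restrict (Set.Ioi (0:ℝ))),
      ‖u ^ ν / (1 + Real.exp (u - b)) - u ^ ν / (1 + Real.exp u) - b * (u ^ ν * fermiP u)‖
        ≤ Real.exp 1 * b ^ 2 * (u ^ ν * Real.exp (-(1 * u))) := by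
    filter_upwards [ae_restrict_mem measurableSet_Ioi] with u hu
    have hu0 : (0:ℝ) < u := hu
    have hfac : u ^ ν / (1 + Real.exp (u - b)) - u ^ ν / (1 + Real.exp u)
        - b * (u ^ ν * fermiP u)
        = u ^ ν * ((1 + Real.exp (u - b))⁻¹ - (1 + Real.exp u)⁻¹ - b * fermiP u) := by
      ring
    rw [hfac, Real.norm_eq_abs, abs_mul, abs_of_nonneg (Real.rpow_nonneg hu0.le ν)]
    have := taylor_bound u hb1
    calc u ^ ν * |(1 + Real.exp (u - b))⁻¹ - (1 + Real.exp u)⁻¹ - b * fermiP u|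
        ≤ u ^ ν * (Real.exp (1 - u) * b ^ 2) := by
          gcongr
      _ = Real.exp 1 * b ^ 2 * (u ^ ν * Real.exp (-(1 * u))) := by
          rw [show (1:ℝ) - u = 1 + -(1 * u) by ring, Real.exp_add]
          ring
  have hnorm := MeasureTheory.norm_integral_le_of_norm_le hbnd_int hptwise
  refine hnorm.trans ?_
  rw [integral_const_mul, int_exp_val hν one_pos]
  have : ‖b ^ 2‖ = b ^ 2 := by
    rw [Real.norm_eq_abs, abs_of_nonneg (sq_nonneg b)]
  rw [this]
  have hone : ((1:ℝ) / 1) ^ (ν + 1) = 1 := by norm_num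
  rw [hone, one_mul]
  exact le_of_eq (by ring)
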